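/- Let K be a field and let C be a connected graded K-algebra generated in degree 1 that is the internal direct sum C = A ⊓ B of graded subalgebras A and B. Suppose A is strongly Koszul with respect to a minimal system of homogeneous generators X_A = {a_1, …, a_c} ⊆ A_1 of A_+, and B is strongly Koszul with respect to a minimal system of homogeneous generators X_B = {b_1, …, b_d} ⊆ B_1 of B_+. Then X_A ∪ X_B is a minimal system of homogeneous generators of C_+ and C is strongly Koszul with respect to X_A ∪ X_B. -/
import Mathlib

/-- The colon ideal `I : x = {a | a * x ∈ I}` of a left ideal `I` by an element `x`. -/
def colonIdeal {A : Type*} [Ring A] (I : Ideal A) (x : A) : Ideal A :=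
  Submodule.comap (LinearMap.toSpanSingleton A A x) I

/-- The augmentation ideal `A_+` of a connected graded algebra. -/
def augIdeal {K A : Type*} [Field K] [Ring A] [Algebra K A]
    (𝒜 : ℕ → Submodule K A) : Ideal A :=
  Ideal.span (⋃ n : ℕ, ((𝒜 (n + 1) : Submodule K A) : Set A))

/-- `A` is strongly Koszul with respect to a set `X` of (homogeneous) generators of the
augmentation ideal `P`: `X` generates `P` as a left ideal, no proper subset of `X`
generates `P` (minimality), and for every `Y ⊊ X` and `x ∈ X \ Y` the colon ideal
`(Y) : x` is generated by a subset of `X`. -/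
def StronglyKoszulWrt {A : Type*} [Ring A] (P : Ideal A) (X : Set A) : Prop :=
  Ideal.span X = P ∧ (∀ Y ⊂ X, Ideal.span Y ≠ P) ∧
    ∀ Y ⊂ X, ∀ z ∈ X \ Y, ∃ Z ⊆ X, colonIdeal (Ideal.span Y) z = Ideal.span Z


lemma mem_colonIdeal {A : Type*} [Ring A] {I : Ideal A} {x z : A} :
    x ∈ colonIdeal I z ↔ x * z ∈ I := by
  simp [colonIdeal, LinearMap.toSpanSingleton_apply, smul_eq_mul]

section Aux

variable {K C : Type*} [Field K] [Ring C] [Algebra K C]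
  (𝒞 : ℕ → Submodule K C) [GradedAlgebra 𝒞]

local notation "π" => GradedRing.projZeroRingHom 𝒞

lemma proj0_succ {x : C} {n : ℕ} (hx : x ∈ 𝒞 (n + 1)) : π x = 0 := by
  simpa [GradedRing.projZeroRingHom_apply] using
    DirectSum.decompose_of_mem_ne 𝒞 hx (Nat.succ_ne_zero n)

variable (SA SB : Subalgebra K C)

lemma eq_proj0_of_mem_inter
    (hAhom : ∀ y ∈ SA, ∀ n : ℕ, ((DirectSum.decompose 𝒞 y n : 𝒞 n) : C) ∈ SA)
    (hBhom : ∀ y ∈ SB, ∀ n : ℕ, ((DirectSum.decompose 𝒞 y n : 𝒞 n) : C) ∈ SB)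
    (hdisj : ∀ n, 1 ≤ n →
      (Subalgebra.toSubmodule SA ⊓ 𝒞 n) ⊓ (Subalgebra.toSubmodule SB ⊓ 𝒞 n) = ⊥)
    {x : C} (hxA : x ∈ SA) (hxB : x ∈ SB) : x = π x := by
  classical
  calc x = ∑ i ∈ (DirectSum.decompose 𝒞 x).support, ((DirectSum.decompose 𝒞 x i : 𝒞 i) : C) :=
        (DirectSum.sum_support_decompose 𝒞 x).symm
    _ = π x := by
        rw [GradedRing.projZeroRingHom_apply]
        apply Finset.sum_eq_single 0
        · intro n hn hne
          obtain ⟨m, rfl⟩ := Nat.exists_eq_succ_of_ne_zero hne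
          have h1 : ((DirectSum.decompose 𝒞 x (m + 1) : 𝒞 (m + 1)) : C) ∈ SA := hAhom x hxA _
          have h2 : ((DirectSum.decompose 𝒞 x (m + 1) : 𝒞 (m + 1)) : C) ∈ SB := hBhom x hxB _
          have h3 : ((DirectSum.decompose 𝒞 x (m + 1) : 𝒞 (m + 1)) : C) ∈ 𝒞 (m + 1) :=
            SetLike.coe_mem _
          have hbot : ((DirectSum.decompose 𝒞 x (m + 1) : 𝒞 (m + 1)) : C) ∈
              (⊥ : Submodule K C) := by
            rw [← hdisj (m + 1) (Nat.succ_le_succ (Nat.zero_le m))]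
            exact ⟨⟨h1, h3⟩, h2, h3⟩
          simpa using hbot
        · intro h0
          have : DirectSum.decompose 𝒞 x 0 = 0 := DFinsupp.notMem_support_iff.mp h0
          simp [this]

lemma decompose_total
    (hconn : 𝒞 0 = 1)
    (hsum : ∀ n, 1 ≤ n →
      𝒞 n = (Subalgebra.toSubmodule SA ⊓ 𝒞 n) ⊔ (Subalgebra.toSubmodule SB ⊓ 𝒞 n))
    (g : C) : ∃ u ∈ SA, ∃ w ∈ SB, π w = 0 ∧ g = u + w := by
  classical
  let S : Submodule K C :=
    { carrier := {g | ∃ u ∈ SA, ∃ w ∈ SB, π w = 0 ∧ g = u + w}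
      add_mem' := by
        rintro x y ⟨u, hu, w, hw, hπw, rfl⟩ ⟨u', hu', w', hw', hπw', rfl⟩
        exact ⟨u + u', add_mem hu hu', w + w', add_mem hw hw',
          by rw [map_add, hπw, hπw', add_zero], by abel⟩
      zero_mem' := ⟨0, zero_mem _, 0, zero_mem _, map_zero _, (add_zero 0).symm⟩
      smul_mem' := by
        rintro k x ⟨u, hu, w, hw, hπw, rfl⟩
        refine ⟨k • u, SMulMemClass.smul_mem k hu, k • w, SMulMemClass.smul_mem k hw, ?_, by
          rw [smul_add]⟩
        have : π (k • w) = k • π w := by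
          rw [GradedRing.projZeroRingHom_apply, GradedRing.projZeroRingHom_apply,
            DirectSum.decompose_smul]
          rfl
        rw [this, hπw, smul_zero] }
  have hle : ∀ n, 𝒞 n ≤ S := by
    intro n
    match n with
    | 0 =>
      intro x hx
      rw [hconn] at hx
      obtain ⟨k, rfl⟩ := Submodule.mem_one.mp hx
      exact ⟨_, Subalgebra.algebraMap_mem SA k, 0, zero_mem _, map_zero _, (add_zero _).symm⟩
    | (n + 1) =>
      intro x hx
      rw [hsum (n + 1) (Nat.succ_le_succ (Nat.zero_le n))] at hx
      obtain ⟨u, hu, w, hw, rfl⟩ := Submodule.mem_sup.mp hx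
      exact ⟨u, hu.1, w, hw.1, proj0_succ 𝒞 hw.2, rfl⟩
  have htop : (⊤ : Submodule K C) ≤ S := by
    rw [← (DirectSum.Decomposition.isInternal 𝒞).submodule_iSup_eq_top]
    exact iSup_le hle
  exact htop (Submodule.mem_top)

/-- The kernel of the degree-zero projection restricted to a subalgebra. -/
def kerIdeal : Ideal SA :=
  RingHom.ker ((GradedRing.projZeroRingHom 𝒞).comp (SA.val : SA →+* C))

lemma mem_kerIdeal_iff (y : SA) : y ∈ kerIdeal 𝒞 SA ↔ π (y : C) = 0 := Iff.rfl

lemma span_pos_eq_ker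
    (hAhom : ∀ y ∈ SA, ∀ n : ℕ, ((DirectSum.decompose 𝒞 y n : 𝒞 n) : C) ∈ SA) :
    Ideal.span {y : SA | ∃ n : ℕ, (y : C) ∈ 𝒞 (n + 1)} = kerIdeal 𝒞 SA := by
  classical
  apply le_antisymm
  · rw [Ideal.span_le]
    rintro y ⟨n, hy⟩
    exact proj0_succ 𝒞 hy
  · intro y hy
    rw [mem_kerIdeal_iff] at hy
    set t : ℕ → SA := fun n => ⟨((DirectSum.decompose 𝒞 (y : C) n : 𝒞 n) : C),
      hAhom (y : C) y.2 n⟩ with ht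
    have hyt : y = ∑ n ∈ (DirectSum.decompose 𝒞 (y : C)).support, t n := by
      apply Subtype.ext
      rw [AddSubmonoidClass.coe_finset_sum]
      exact (DirectSum.sum_support_decompose 𝒞 (y : C)).symm
    rw [hyt]
    apply Ideal.sum_mem
    intro n hn
    apply Ideal.subset_span
    match n with
    | 0 =>
      exfalso
      apply DFinsupp.mem_support_iff.mp hn
      apply Subtype.ext
      simpa [GradedRing.projZeroRingHom_apply] using hy
    | (m + 1) => exact ⟨m, SetLike.coe_mem _⟩

lemma span_le_ker {S : Set SA} (hS : ∀ y ∈ S, π (y : C) = 0) :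
    Ideal.span S ≤ kerIdeal 𝒞 SA :=
  Ideal.span_le.mpr hS

lemma mem_span_image_iff
    (hconn : 𝒞 0 = 1)
    (hsum : ∀ n, 1 ≤ n →
      𝒞 n = (Subalgebra.toSubmodule SA ⊓ 𝒞 n) ⊔ (Subalgebra.toSubmodule SB ⊓ 𝒞 n))
    (hann : ∀ u ∈ SA, ∀ w ∈ SB,
      ((DirectSum.decompose 𝒞 u 0 : 𝒞 0) : C) = 0 →
      ((DirectSum.decompose 𝒞 w 0 : 𝒞 0) : C) = 0 → u * w = 0 ∧ w * u = 0)
    {S : Set SA} (hS : ∀ y ∈ S, π (y : C) = 0) (x : C) :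
    x ∈ Ideal.span ((fun y : SA => (y : C)) '' S) ↔
      ∃ y ∈ Ideal.span S, (y : C) = x := by
  have hann' : ∀ u ∈ SA, ∀ w ∈ SB, π u = 0 → π w = 0 → u * w = 0 ∧ w * u = 0 := by
    intro u hu w hw h1 h2
    exact hann u hu w hw (by simpa [GradedRing.projZeroRingHom_apply] using h1)
      (by simpa [GradedRing.projZeroRingHom_apply] using h2)
  constructor
  · intro hx
    induction hx using Submodule.span_induction with
    | mem x hxm =>
      obtain ⟨y, hyS, rfl⟩ := hxm
      exact ⟨y, Ideal.subset_span hyS, rfl⟩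
    | zero => exact ⟨0, zero_mem _, rfl⟩
    | add x y hx hy ihx ihy =>
      obtain ⟨y1, hy1, rfl⟩ := ihx
      obtain ⟨y2, hy2, rfl⟩ := ihy
      exact ⟨y1 + y2, add_mem hy1 hy2, rfl⟩
    | smul r x hx ih =>
      obtain ⟨y, hy, rfl⟩ := ih
      obtain ⟨u, hu, w, hw, hπw, rfl⟩ := decompose_total 𝒞 SA SB hconn hsum r
      have hπy : π (y : C) = 0 := span_le_ker 𝒞 SA hS hy
      have hwy : w * (y : C) = 0 := (hann' (y : C) y.2 w hw hπy hπw).2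
      refine ⟨⟨u, hu⟩ * y, Ideal.mul_mem_left _ _ hy, ?_⟩
      have : (u + w) • (y : C) = u * y + w * y := by rw [smul_eq_mul, add_mul]
      rw [this, hwy, add_zero]
      rfl
  · rintro ⟨y, hy, rfl⟩
    induction hy using Submodule.span_induction with
    | mem y hym => exact Ideal.subset_span ⟨y, hym, rfl⟩
    | zero => simpa using (Ideal.span _).zero_mem
    | add y z hy hz ihy ihz => simpa using add_mem ihy ihz
    | smul r y hy ih =>
      have : ((r • y : SA) : C) = (r : C) * (y : C) := rfl
      rw [this]
      exact Ideal.mul_mem_left _ _ ih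

end Aux

section Main

variable {K C : Type*} [Field K] [Ring C] [Algebra K C]
  (𝒞 : ℕ → Submodule K C) [GradedAlgebra 𝒞]

local notation "π" => GradedRing.projZeroRingHom 𝒞

variable (SA SB : Subalgebra K C)

lemma q_eq_zero
    (hAhom : ∀ y ∈ SA, ∀ n : ℕ, ((DirectSum.decompose 𝒞 y n : 𝒞 n) : C) ∈ SA)
    (hBhom : ∀ y ∈ SB, ∀ n : ℕ, ((DirectSum.decompose 𝒞 y n : 𝒞 n) : C) ∈ SB)
    (hdisj : ∀ n, 1 ≤ n →
      (Subalgebra.toSubmodule SA ⊓ 𝒞 n) ⊓ (Subalgebra.toSubmodule SB ⊓ 𝒞 n) = ⊥)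
    {S : Set SB} (hS : ∀ y ∈ S, π (y : C) = 0) {q : SB} (hq : q ∈ Ideal.span S)
    (hqA : (q : C) ∈ SA) : (q : C) = 0 := by
  have hπq : π (q : C) = 0 := span_le_ker 𝒞 SB hS hq
  have h := eq_proj0_of_mem_inter 𝒞 SA SB hAhom hBhom hdisj hqA q.2
  rw [hπq] at h
  exact h

lemma split_mem_span
    (hconn : 𝒞 0 = 1)
    (hsum : ∀ n, 1 ≤ n →
      𝒞 n = (Subalgebra.toSubmodule SA ⊓ 𝒞 n) ⊔ (Subalgebra.toSubmodule SB ⊓ 𝒞 n))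
    (hann : ∀ u ∈ SA, ∀ w ∈ SB,
      ((DirectSum.decompose 𝒞 u 0 : 𝒞 0) : C) = 0 →
      ((DirectSum.decompose 𝒞 w 0 : 𝒞 0) : C) = 0 → u * w = 0 ∧ w * u = 0)
    {c d : ℕ} (a : Fin c → SA) (ha1 : ∀ i, ((a i : C)) ∈ 𝒞 1)
    (b : Fin d → SB) (hb1 : ∀ i, ((b i : C)) ∈ 𝒞 1)
    {Y : Set C}
    (hYX : Y ⊆ (Set.range fun i => ((a i : C))) ∪ (Set.range fun i => ((b i : C))))
    {x : C} (hx : x ∈ Ideal.span Y) :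
    ∃ p ∈ Ideal.span (Set.range a ∩ {y : SA | (y : C) ∈ Y}),
      ∃ q ∈ Ideal.span (Set.range b ∩ {y : SB | (y : C) ∈ Y}),
        (p : C) + (q : C) = x := by
  have hsum' := fun n hn => (hsum n hn).trans (sup_comm _ _)
  have hann' : ∀ u ∈ SB, ∀ w ∈ SA,
      ((DirectSum.decompose 𝒞 u 0 : 𝒞 0) : C) = 0 →
      ((DirectSum.decompose 𝒞 w 0 : 𝒞 0) : C) = 0 → u * w = 0 ∧ w * u = 0 :=
    fun u hu w hw h1 h2 => ⟨(hann w hw u hu h2 h1).2, (hann w hw u hu h2 h1).1⟩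
  have hYeq : Y = ((fun y : SA => (y : C)) '' (Set.range a ∩ {y : SA | (y : C) ∈ Y})) ∪
      ((fun y : SB => (y : C)) '' (Set.range b ∩ {y : SB | (y : C) ∈ Y})) := by
    apply Set.Subset.antisymm
    · intro y hy
      rcases hYX hy with ⟨i, rfl⟩ | ⟨i, rfl⟩
      · exact Or.inl ⟨a i, ⟨⟨i, rfl⟩, hy⟩, rfl⟩
      · exact Or.inr ⟨b i, ⟨⟨i, rfl⟩, hy⟩, rfl⟩
    · rintro y (⟨z, hz, rfl⟩ | ⟨z, hz, rfl⟩) <;> exact hz.2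
  rw [hYeq, Ideal.span_union] at hx
  obtain ⟨p0, hp0, q0, hq0, hpq⟩ := Submodule.mem_sup.mp hx
  have hSa : ∀ y ∈ Set.range a ∩ {y : SA | (y : C) ∈ Y}, π (y : C) = 0 := by
    rintro y ⟨⟨i, rfl⟩, -⟩; exact proj0_succ 𝒞 (ha1 i)
  have hSb : ∀ y ∈ Set.range b ∩ {y : SB | (y : C) ∈ Y}, π (y : C) = 0 := by
    rintro y ⟨⟨i, rfl⟩, -⟩; exact proj0_succ 𝒞 (hb1 i)
  obtain ⟨p, hp, rfl⟩ := (mem_span_image_iff 𝒞 SA SB hconn hsum hann hSa p0).mp hp0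
  obtain ⟨q, hq, rfl⟩ := (mem_span_image_iff 𝒞 SB SA hconn hsum' hann' hSb q0).mp hq0
  exact ⟨p, hp, q, hq, hpq⟩

lemma span_X_eq
    (hconn : 𝒞 0 = 1)
    (hsum : ∀ n, 1 ≤ n →
      𝒞 n = (Subalgebra.toSubmodule SA ⊓ 𝒞 n) ⊔ (Subalgebra.toSubmodule SB ⊓ 𝒞 n))
    (hann : ∀ u ∈ SA, ∀ w ∈ SB,
      ((DirectSum.decompose 𝒞 u 0 : 𝒞 0) : C) = 0 →
      ((DirectSum.decompose 𝒞 w 0 : 𝒞 0) : C) = 0 → u * w = 0 ∧ w * u = 0)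
    {c d : ℕ} (a : Fin c → SA) (ha1 : ∀ i, ((a i : C)) ∈ 𝒞 1)
    (b : Fin d → SB) (hb1 : ∀ i, ((b i : C)) ∈ 𝒞 1)
    (hA1 : Ideal.span (Set.range a) = Ideal.span {y : SA | ∃ n : ℕ, (y : C) ∈ 𝒞 (n + 1)})
    (hB1 : Ideal.span (Set.range b) = Ideal.span {y : SB | ∃ n : ℕ, (y : C) ∈ 𝒞 (n + 1)}) :
    Ideal.span ((Set.range fun i => ((a i : C))) ∪ (Set.range fun i => ((b i : C)))) =
      augIdeal 𝒞 := by
  have hsum' := fun n hn => (hsum n hn).trans (sup_comm _ _)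
  have hann' : ∀ u ∈ SB, ∀ w ∈ SA,
      ((DirectSum.decompose 𝒞 u 0 : 𝒞 0) : C) = 0 →
      ((DirectSum.decompose 𝒞 w 0 : 𝒞 0) : C) = 0 → u * w = 0 ∧ w * u = 0 :=
    fun u hu w hw h1 h2 => ⟨(hann w hw u hu h2 h1).2, (hann w hw u hu h2 h1).1⟩
  apply le_antisymm
  · rw [Ideal.span_le]
    rintro x (⟨i, rfl⟩ | ⟨i, rfl⟩)
    · exact Ideal.subset_span (Set.mem_iUnion.mpr ⟨0, ha1 i⟩)
    · exact Ideal.subset_span (Set.mem_iUnion.mpr ⟨0, hb1 i⟩)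
  · rw [augIdeal, Ideal.span_le]
    intro x hx
    rw [Set.mem_iUnion] at hx
    obtain ⟨n, hx⟩ := hx
    rw [SetLike.mem_coe] at hx
    rw [hsum (n + 1) (Nat.succ_le_succ (Nat.zero_le n))] at hx
    obtain ⟨u, hu, w, hw, rfl⟩ := Submodule.mem_sup.mp hx
    rw [SetLike.mem_coe]
    apply Submodule.add_mem
    · have h1 : (⟨u, hu.1⟩ : SA) ∈ Ideal.span (Set.range a) := by
        rw [hA1]; exact Ideal.subset_span ⟨n, hu.2⟩
      have h2 : u ∈ Ideal.span ((fun y : SA => (y : C)) '' Set.range a) :=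
        (mem_span_image_iff 𝒞 SA SB hconn hsum hann
          (by rintro y ⟨i, rfl⟩; exact proj0_succ 𝒞 (ha1 i)) u).mpr ⟨_, h1, rfl⟩
      refine Ideal.span_mono ?_ h2
      rintro _ ⟨y, ⟨i, rfl⟩, rfl⟩
      exact Or.inl ⟨i, rfl⟩
    · have h1 : (⟨w, hw.1⟩ : SB) ∈ Ideal.span (Set.range b) := by
        rw [hB1]; exact Ideal.subset_span ⟨n, hw.2⟩
      have h2 : w ∈ Ideal.span ((fun y : SB => (y : C)) '' Set.range b) :=
        (mem_span_image_iff 𝒞 SB SA hconn hsum' hann'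
          (by rintro y ⟨i, rfl⟩; exact proj0_succ 𝒞 (hb1 i)) w).mpr ⟨_, h1, rfl⟩
      refine Ideal.span_mono ?_ h2
      rintro _ ⟨y, ⟨i, rfl⟩, rfl⟩
      exact Or.inr ⟨i, rfl⟩

lemma aux_min
    (hconn : 𝒞 0 = 1)
    (hAhom : ∀ y ∈ SA, ∀ n : ℕ, ((DirectSum.decompose 𝒞 y n : 𝒞 n) : C) ∈ SA)
    (hBhom : ∀ y ∈ SB, ∀ n : ℕ, ((DirectSum.decompose 𝒞 y n : 𝒞 n) : C) ∈ SB)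
    (hsum : ∀ n, 1 ≤ n →
      𝒞 n = (Subalgebra.toSubmodule SA ⊓ 𝒞 n) ⊔ (Subalgebra.toSubmodule SB ⊓ 𝒞 n))
    (hdisj : ∀ n, 1 ≤ n →
      (Subalgebra.toSubmodule SA ⊓ 𝒞 n) ⊓ (Subalgebra.toSubmodule SB ⊓ 𝒞 n) = ⊥)
    (hann : ∀ u ∈ SA, ∀ w ∈ SB,
      ((DirectSum.decompose 𝒞 u 0 : 𝒞 0) : C) = 0 →
      ((DirectSum.decompose 𝒞 w 0 : 𝒞 0) : C) = 0 → u * w = 0 ∧ w * u = 0)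
    {c d : ℕ} (a : Fin c → SA) (ha1 : ∀ i, ((a i : C)) ∈ 𝒞 1)
    (b : Fin d → SB) (hb1 : ∀ i, ((b i : C)) ∈ 𝒞 1)
    (hA1 : Ideal.span (Set.range a) = Ideal.span {y : SA | ∃ n : ℕ, (y : C) ∈ 𝒞 (n + 1)})
    (hA2 : ∀ Y ⊂ Set.range a,
      Ideal.span Y ≠ Ideal.span {y : SA | ∃ n : ℕ, (y : C) ∈ 𝒞 (n + 1)})
    {Y : Set C}
    (hYX : Y ⊆ (Set.range fun i => ((a i : C))) ∪ (Set.range fun i => ((b i : C))))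
    (k : Fin c) (hkY : ((a k : C)) ∉ Y)
    (hspan : Ideal.span Y = augIdeal 𝒞) : False := by
  have hak : ((a k : C)) ∈ Ideal.span Y := by
    rw [hspan]; exact Ideal.subset_span (Set.mem_iUnion.mpr ⟨0, ha1 k⟩)
  obtain ⟨p, hp, q, hq, hpq⟩ :=
    split_mem_span 𝒞 SA SB hconn hsum hann a ha1 b hb1 hYX hak
  have hq0 : (q : C) = 0 := by
    apply q_eq_zero 𝒞 SA SB hAhom hBhom hdisj
      (by rintro y ⟨⟨i, rfl⟩, -⟩; exact proj0_succ 𝒞 (hb1 i)) hq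
    have hqc : (q : C) = (a k : C) - (p : C) := eq_sub_of_add_eq' hpq
    rw [hqc]; exact sub_mem (a k).2 p.2
  have hakp : a k = p := by
    apply Subtype.ext
    rw [← hpq, hq0, add_zero]
  have hmem : a k ∈ Ideal.span (Set.range a \ {a k}) := by
    refine Ideal.span_mono (t := Set.range a \ {a k}) ?_ (hakp ▸ hp)
    rintro y ⟨hy1, hy2⟩
    refine ⟨hy1, fun he => hkY ?_⟩
    rw [Set.mem_singleton_iff] at he
    rw [← he]; exact hy2
  have hseq : Ideal.span (Set.range a \ {a k}) = Ideal.span (Set.range a) := by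
    apply le_antisymm (Ideal.span_mono Set.diff_subset)
    rw [Ideal.span_le]
    rintro x ⟨i, rfl⟩
    by_cases he : a i = a k
    · rw [he]; exact hmem
    · exact Ideal.subset_span ⟨⟨i, rfl⟩, he⟩
  exact hA2 (Set.range a \ {a k}) ⟨Set.diff_subset, fun h => (h ⟨k, rfl⟩).2 rfl⟩ (hseq.trans hA1)

lemma aux_colon
    (hconn : 𝒞 0 = 1)
    (hAhom : ∀ y ∈ SA, ∀ n : ℕ, ((DirectSum.decompose 𝒞 y n : 𝒞 n) : C) ∈ SA)
    (hBhom : ∀ y ∈ SB, ∀ n : ℕ, ((DirectSum.decompose 𝒞 y n : 𝒞 n) : C) ∈ SB)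
    (hsum : ∀ n, 1 ≤ n →
      𝒞 n = (Subalgebra.toSubmodule SA ⊓ 𝒞 n) ⊔ (Subalgebra.toSubmodule SB ⊓ 𝒞 n))
    (hdisj : ∀ n, 1 ≤ n →
      (Subalgebra.toSubmodule SA ⊓ 𝒞 n) ⊓ (Subalgebra.toSubmodule SB ⊓ 𝒞 n) = ⊥)
    (hann : ∀ u ∈ SA, ∀ w ∈ SB,
      ((DirectSum.decompose 𝒞 u 0 : 𝒞 0) : C) = 0 →
      ((DirectSum.decompose 𝒞 w 0 : 𝒞 0) : C) = 0 → u * w = 0 ∧ w * u = 0)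
    {c d : ℕ} (a : Fin c → SA) (ha1 : ∀ i, ((a i : C)) ∈ 𝒞 1)
    (b : Fin d → SB) (hb1 : ∀ i, ((b i : C)) ∈ 𝒞 1)
    (hB1 : Ideal.span (Set.range b) = Ideal.span {y : SB | ∃ n : ℕ, (y : C) ∈ 𝒞 (n + 1)})
    (hSKA3 : ∀ Y ⊂ Set.range a, ∀ z ∈ Set.range a \ Y, ∃ Z ⊆ Set.range a,
      colonIdeal (Ideal.span Y) z = Ideal.span Z)
    {Y : Set C}
    (hYX : Y ⊆ (Set.range fun i => ((a i : C))) ∪ (Set.range fun i => ((b i : C))))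
    (k : Fin c) (hkY : ((a k : C)) ∉ Y) :
    ∃ Z ⊆ (Set.range fun i => ((a i : C))) ∪ (Set.range fun i => ((b i : C))),
      colonIdeal (Ideal.span Y) ((a k : C)) = Ideal.span Z := by
  have hsum' := fun n hn => (hsum n hn).trans (sup_comm _ _)
  have hann' : ∀ u ∈ SB, ∀ w ∈ SA,
      ((DirectSum.decompose 𝒞 u 0 : 𝒞 0) : C) = 0 →
      ((DirectSum.decompose 𝒞 w 0 : 𝒞 0) : C) = 0 → u * w = 0 ∧ w * u = 0 :=
    fun u hu w hw h1 h2 => ⟨(hann w hw u hu h2 h1).2, (hann w hw u hu h2 h1).1⟩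
  have hdz : ∀ x : C, x ∈ 𝒞 1 → ((DirectSum.decompose 𝒞 x 0 : 𝒞 0) : C) = 0 :=
    fun x hx => DirectSum.decompose_of_mem_ne 𝒞 hx one_ne_zero
  set PA : Set SA := Set.range a ∩ {y : SA | (y : C) ∈ Y} with hPAdef
  have hPAk : a k ∉ PA := fun h => hkY h.2
  obtain ⟨Z', hZ'sub, hZ'⟩ := hSKA3 PA
    ⟨Set.inter_subset_left, fun h => hPAk (h ⟨k, rfl⟩)⟩ (a k) ⟨⟨k, rfl⟩, hPAk⟩
  have hSZ' : ∀ y ∈ Z', π (y : C) = 0 := by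
    intro y hy; obtain ⟨i, rfl⟩ := hZ'sub hy; exact proj0_succ 𝒞 (ha1 i)
  have hSPA : ∀ y ∈ PA, π (y : C) = 0 := by
    rintro y ⟨⟨i, rfl⟩, -⟩; exact proj0_succ 𝒞 (ha1 i)
  have hSrb : ∀ y ∈ Set.range b, π (y : C) = 0 := by
    rintro y ⟨i, rfl⟩; exact proj0_succ 𝒞 (hb1 i)
  refine ⟨((fun y : SA => (y : C)) '' Z') ∪ (Set.range fun i => ((b i : C))), ?_, ?_⟩
  · apply Set.union_subset_union _ subset_rfl
    rintro x ⟨y, hy, rfl⟩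
    obtain ⟨i, rfl⟩ := hZ'sub hy
    exact ⟨i, rfl⟩
  · apply le_antisymm
    · intro g hg
      rw [mem_colonIdeal] at hg
      obtain ⟨u, hu, w, hw, hπw, rfl⟩ := decompose_total 𝒞 SA SB hconn hsum g
      have hπw' : ((DirectSum.decompose 𝒞 w 0 : 𝒞 0) : C) = 0 := by
        rw [← GradedRing.projZeroRingHom_apply]; exact hπw
      have hwak : w * (a k : C) = 0 :=
        (hann (a k : C) (a k).2 w hw (hdz _ (ha1 k)) hπw').2
      have huak : u * (a k : C) ∈ Ideal.span Y := by
        rwa [add_mul, hwak, add_zero] at hg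
      obtain ⟨p, hp, q, hq, hpq⟩ :=
        split_mem_span 𝒞 SA SB hconn hsum hann a ha1 b hb1 hYX huak
      have hq0 : (q : C) = 0 := by
        apply q_eq_zero 𝒞 SA SB hAhom hBhom hdisj
          (by rintro y ⟨⟨i, rfl⟩, -⟩; exact proj0_succ 𝒞 (hb1 i)) hq
        have hqc : (q : C) = u * (a k : C) - (p : C) := eq_sub_of_add_eq' hpq
        rw [hqc]; exact sub_mem (mul_mem hu (a k).2) p.2
      have hupk : (⟨u, hu⟩ : SA) * a k = p := by
        apply Subtype.ext
        rw [MulMemClass.coe_mul, ← hpq, hq0, add_zero]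
      have humem : (⟨u, hu⟩ : SA) ∈ Ideal.span Z' := by
        rw [← hZ', mem_colonIdeal, hupk]; exact hp
      have huC : u ∈ Ideal.span ((fun y : SA => (y : C)) '' Z') :=
        (mem_span_image_iff 𝒞 SA SB hconn hsum hann hSZ' u).mpr ⟨_, humem, rfl⟩
      have hwmem : (⟨w, hw⟩ : SB) ∈ Ideal.span (Set.range b) := by
        rw [hB1, span_pos_eq_ker 𝒞 SB hBhom]
        exact hπw
      have hwC : w ∈ Ideal.span ((fun y : SB => (y : C)) '' Set.range b) :=
        (mem_span_image_iff 𝒞 SB SA hconn hsum' hann' hSrb w).mpr ⟨_, hwmem, rfl⟩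
      have hXBeq : ((fun y : SB => (y : C)) '' Set.range b) =
          (Set.range fun i => ((b i : C))) := by
        rw [← Set.range_comp]; rfl
      rw [Ideal.span_union]
      exact Submodule.mem_sup.mpr ⟨u, huC, w, hXBeq ▸ hwC, rfl⟩
    · rw [Ideal.span_le]
      rintro x (⟨y, hyZ, rfl⟩ | ⟨i, rfl⟩)
      · rw [SetLike.mem_coe, mem_colonIdeal]
        have hy2 : y ∈ colonIdeal (Ideal.span PA) (a k) := by
          rw [hZ']; exact Ideal.subset_span hyZ
        rw [mem_colonIdeal] at hy2
        have h3 : ((y * a k : SA) : C) ∈ Ideal.span ((fun y : SA => (y : C)) '' PA) :=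
          (mem_span_image_iff 𝒞 SA SB hconn hsum hann hSPA _).mpr ⟨_, hy2, rfl⟩
        have hle : Ideal.span ((fun y : SA => (y : C)) '' PA) ≤ Ideal.span Y :=
          Ideal.span_mono (by rintro _ ⟨z, hz, rfl⟩; exact hz.2)
        have h4 := hle h3
        rw [MulMemClass.coe_mul] at h4
        exact h4
      · rw [SetLike.mem_coe, mem_colonIdeal]
        have h0 : ((b i : C)) * ((a k : C)) = 0 :=
          (hann (a k : C) (a k).2 (b i : C) (b i).2 (hdz _ (ha1 k)) (hdz _ (hb1 i))).2
        rw [h0]; exact zero_mem _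

end Main

/-- Let `C = A ⊓ B` be the internal direct sum of graded subalgebras
`A` and `B`.  If `A` is strongly Koszul with respect to a minimal system of homogeneous
generators `X_A = {a_1, …, a_c} ⊆ A_1` of `A_+`, and `B` is strongly Koszul with respect
to `X_B = {b_1, …, b_d} ⊆ B_1`, then `X_A ∪ X_B` is a minimal system of homogeneous
generators of `C_+` and `C` is strongly Koszul with respect to it. -/
theorem stmt6 {K C : Type*} [Field K] [Ring C] [Algebra K C]
    (𝒞 : ℕ → Submodule K C) [GradedAlgebra 𝒞]
    (hconn : 𝒞 0 = 1)
    (hgen : Algebra.adjoin K ((𝒞 1 : Submodule K C) : Set C) = ⊤)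
    (SA SB : Subalgebra K C)
    (hAhom : ∀ y ∈ SA, ∀ n : ℕ, ((DirectSum.decompose 𝒞 y n : 𝒞 n) : C) ∈ SA)
    (hBhom : ∀ y ∈ SB, ∀ n : ℕ, ((DirectSum.decompose 𝒞 y n : 𝒞 n) : C) ∈ SB)
    (hAgen : Algebra.adjoin K ((SA : Set C) ∩ ((𝒞 1 : Submodule K C) : Set C)) = SA)
    (hBgen : Algebra.adjoin K ((SB : Set C) ∩ ((𝒞 1 : Submodule K C) : Set C)) = SB)
    (hsum : ∀ n, 1 ≤ n →
      𝒞 n = (Subalgebra.toSubmodule SA ⊓ 𝒞 n) ⊔ (Subalgebra.toSubmodule SB ⊓ 𝒞 n))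
    (hdisj : ∀ n, 1 ≤ n →
      (Subalgebra.toSubmodule SA ⊓ 𝒞 n) ⊓ (Subalgebra.toSubmodule SB ⊓ 𝒞 n) = ⊥)
    (hann : ∀ u ∈ SA, ∀ w ∈ SB,
      ((DirectSum.decompose 𝒞 u 0 : 𝒞 0) : C) = 0 →
      ((DirectSum.decompose 𝒞 w 0 : 𝒞 0) : C) = 0 → u * w = 0 ∧ w * u = 0)
    (c d : ℕ)
    (a : Fin c → SA) (ha1 : ∀ i, ((a i : C)) ∈ 𝒞 1)
    (b : Fin d → SB) (hb1 : ∀ i, ((b i : C)) ∈ 𝒞 1)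
    -- `A` strongly Koszul w.r.t. `X_A`, `B` strongly Koszul w.r.t. `X_B`
    (hSKA : StronglyKoszulWrt
      (Ideal.span {y : SA | ∃ n : ℕ, (y : C) ∈ 𝒞 (n + 1)}) (Set.range a))
    (hSKB : StronglyKoszulWrt
      (Ideal.span {y : SB | ∃ n : ℕ, (y : C) ∈ 𝒞 (n + 1)}) (Set.range b)) :
    StronglyKoszulWrt (augIdeal 𝒞)
      ((Set.range fun i => ((a i : C))) ∪ (Set.range fun i => ((b i : C)))) := by
  have hsum' := fun n hn => (hsum n hn).trans (sup_comm _ _)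
  have hdisj' : ∀ n, 1 ≤ n →
      (Subalgebra.toSubmodule SB ⊓ 𝒞 n) ⊓ (Subalgebra.toSubmodule SA ⊓ 𝒞 n) = ⊥ :=
    fun n hn => (inf_comm _ _).trans (hdisj n hn)
  have hann' : ∀ u ∈ SB, ∀ w ∈ SA,
      ((DirectSum.decompose 𝒞 u 0 : 𝒞 0) : C) = 0 →
      ((DirectSum.decompose 𝒞 w 0 : 𝒞 0) : C) = 0 → u * w = 0 ∧ w * u = 0 :=
    fun u hu w hw h1 h2 => ⟨(hann w hw u hu h2 h1).2, (hann w hw u hu h2 h1).1⟩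
  refine ⟨span_X_eq 𝒞 SA SB hconn hsum hann a ha1 b hb1 hSKA.1 hSKB.1, ?_, ?_⟩
  · intro Y hY heq
    obtain ⟨x, hxX, hxY⟩ := Set.exists_of_ssubset hY
    rcases hxX with ⟨k, rfl⟩ | ⟨k, rfl⟩
    · exact aux_min 𝒞 SA SB hconn hAhom hBhom hsum hdisj hann a ha1 b hb1
        hSKA.1 hSKA.2.1 hY.subset k hxY heq
    · exact aux_min 𝒞 SB SA hconn hBhom hAhom hsum' hdisj' hann' b hb1 a ha1
        hSKB.1 hSKB.2.1 (hY.subset.trans (Set.union_comm _ _).subset) k hxY heq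
  · intro Y hY z hz
    rcases hz.1 with ⟨k, rfl⟩ | ⟨k, rfl⟩
    · exact aux_colon 𝒞 SA SB hconn hAhom hBhom hsum hdisj hann a ha1 b hb1
        hSKB.1 hSKA.2.2 hY.subset k hz.2
    · obtain ⟨Z, hZsub, hZeq⟩ := aux_colon 𝒞 SB SA hconn hBhom hAhom hsum' hdisj' hann'
        b hb1 a ha1 hSKA.1 hSKB.2.2 (hY.subset.trans (Set.union_comm _ _).subset) k hz.2
      exact ⟨Z, hZsub.trans (Set.union_comm _ _).subset, hZeq⟩
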